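/- The mass assigned by the Kaplan–Meier estimator to each observed failure time has the IPCW form: for every i with δ_i = 1, Ŝ(x_i−) − Ŝ(x_i) = 1/(n Ĝ(x_i−)), where Ĝ(x_i−) > 0. -/
import Mathlib

open Finset

/-- Number at risk at time `u`: `Y(u) = #{j : x_j ≥ u}`. -/
noncomputable def atRisk {n : ℕ} (x : Fin n → ℝ) (u : ℝ) : ℕ :=
  (univ.filter fun j => u ≤ x j).card

/-- Kaplan–Meier estimator of the failure-time survival function:
`Ŝ(t) = ∏_{i : x_i ≤ t, δ_i = 1} (1 − 1/Y(x_i))`. -/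
noncomputable def kmS {n : ℕ} (x : Fin n → ℝ) (δ : Fin n → Bool) (t : ℝ) : ℝ :=
  ∏ i ∈ univ.filter (fun i => x i ≤ t ∧ δ i = true), (1 - 1 / (atRisk x (x i) : ℝ))

/-- Left limit of the Kaplan–Meier estimator of the failure-time survival function:
`Ŝ(t−) = ∏_{i : x_i < t, δ_i = 1} (1 − 1/Y(x_i))`. -/
noncomputable def kmSminus {n : ℕ} (x : Fin n → ℝ) (δ : Fin n → Bool) (t : ℝ) : ℝ :=
  ∏ i ∈ univ.filter (fun i => x i < t ∧ δ i = true), (1 - 1 / (atRisk x (x i) : ℝ))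

/-- Left limit of the Kaplan–Meier estimator of the censoring survival function:
`Ĝ(t−) = ∏_{i : x_i < t, δ_i = 0} (1 − 1/Y(x_i))`. -/
noncomputable def kmGminus {n : ℕ} (x : Fin n → ℝ) (δ : Fin n → Bool) (t : ℝ) : ℝ :=
  ∏ i ∈ univ.filter (fun i => x i < t ∧ δ i = false), (1 - 1 / (atRisk x (x i) : ℝ))

lemma atRisk_compl {n : ℕ} (x : Fin n → ℝ) (u : ℝ) :
    atRisk x u + (univ.filter fun j => x j < u).card = n := by
  have h := Finset.card_filter_add_card_filter_not
    (s := (univ : Finset (Fin n))) (p := fun j => u ≤ x j)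
  simpa [atRisk, not_le] using h

/-- Telescoping product over a downward-closed set. -/
lemma aux_prod {n : ℕ} (hn : 0 < n) (x : Fin n → ℝ) (hinj : Function.Injective x)
    (S : Finset (Fin n)) (hS : ∀ j ∈ S, ∀ k, x k < x j → k ∈ S) :
    ∏ j ∈ S, (1 - 1 / (atRisk x (x j) : ℝ)) = ((n : ℝ) - S.card) / n := by
  induction S using Finset.strongInduction with
  | _ S ih =>
    rcases S.eq_empty_or_nonempty with rfl | hne
    · have : (n : ℝ) ≠ 0 := Nat.cast_ne_zero.mpr hn.ne'
      simp [this]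
    · obtain ⟨m, hmS, hmax⟩ := S.exists_max_image x hne
      have herase : S.erase m = univ.filter fun k => x k < x m := by
        ext k
        simp only [Finset.mem_erase, Finset.mem_filter, Finset.mem_univ, true_and]
        constructor
        · rintro ⟨hk, hkS⟩
          exact lt_of_le_of_ne (hmax k hkS) (fun h => hk (hinj h))
        · intro h
          exact ⟨fun e => absurd (e ▸ h) (lt_irrefl _), hS m hmS k h⟩
      have hcard : atRisk x (x m) + (S.erase m).card = n := by
        rw [herase]; exact atRisk_compl x (x m)
      have hmem : m ∈ univ.filter fun j => x m ≤ x j := by simp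
      have hY1 : 1 ≤ atRisk x (x m) := Finset.card_pos.mpr ⟨m, hmem⟩
      have hclosed : ∀ j ∈ S.erase m, ∀ k, x k < x j → k ∈ S.erase m := by
        intro j hj k hk
        rw [herase] at hj ⊢
        simp only [Finset.mem_filter, Finset.mem_univ, true_and] at hj ⊢
        exact hk.trans hj
      have hih := ih (S.erase m) (Finset.erase_ssubset hmS) hclosed
      rw [← Finset.prod_erase_mul _ _ hmS, hih]
      have hcS : S.card = (S.erase m).card + 1 := (Finset.card_erase_add_one hmS).symm
      set c := (S.erase m).card with hc
      have hY : atRisk x (x m) = n - c := by omega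
      have hcn : c + 1 ≤ n := by omega
      have h1 : ((n : ℝ) - c) ≠ 0 := by
        have : (c : ℝ) < n := by exact_mod_cast (by omega : c < n)
        linarith
      have hn' : (n : ℝ) ≠ 0 := Nat.cast_ne_zero.mpr hn.ne'
      rw [hY, hcS]
      have hcast : ((n - c : ℕ) : ℝ) = (n : ℝ) - c := by
        push_cast [Nat.cast_sub (by omega : c ≤ n)]; ring
      rw [hcast]
      push_cast
      field_simp
      ring

lemma factor_pos {n : ℕ} (x : Fin n → ℝ) (hinj : Function.Injective x)
    {j i : Fin n} (h : x j < x i) : 0 < 1 - 1 / (atRisk x (x j) : ℝ) := by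
  have h2 : 2 ≤ atRisk x (x j) := by
    have : ({j, i} : Finset (Fin n)) ⊆ univ.filter fun k => x j ≤ x k := by
      intro k hk
      simp only [Finset.mem_insert, Finset.mem_singleton] at hk
      rcases hk with rfl | rfl <;> simp [le_of_lt h]
    have := Finset.card_le_card this
    rwa [Finset.card_pair (fun e => absurd (e ▸ h) (lt_irrefl _))] at this
  have h2' : (2 : ℝ) ≤ (atRisk x (x j) : ℝ) := by exact_mod_cast h2
  have : 1 / (atRisk x (x j) : ℝ) ≤ 1 / 2 := by
    apply one_div_le_one_div_of_le <;> linarith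
  linarith

/-- **IPCW form of the Kaplan–Meier mass at each observed failure time:**
for every `i` with `δ_i = 1`, `Ĝ(x_i−) > 0` and
`Ŝ(x_i−) − Ŝ(x_i) = 1/(n Ĝ(x_i−))`. -/
theorem km_mass_ipcw {n : ℕ} (hn : 0 < n)
    (x : Fin n → ℝ) (δ : Fin n → Bool)
    (hpos : ∀ i, 0 < x i) (hinj : Function.Injective x) :
    ∀ i, δ i = true →
      0 < kmGminus x δ (x i) ∧
      kmSminus x δ (x i) - kmS x δ (x i) = 1 / (n * kmGminus x δ (x i)) := by
  intro i hδi
  set t := x i with ht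
  -- positivity of factors
  have hfac : ∀ j, x j < t → 0 < 1 - 1 / (atRisk x (x j) : ℝ) := fun j h =>
    factor_pos x hinj h
  have hG : 0 < kmGminus x δ t := by
    apply Finset.prod_pos
    intro j hj
    simp only [Finset.mem_filter] at hj
    exact hfac j hj.2.1
  have hSm : 0 < kmSminus x δ t := by
    apply Finset.prod_pos
    intro j hj
    simp only [Finset.mem_filter] at hj
    exact hfac j hj.2.1
  refine ⟨hG, ?_⟩
  -- product over all j with x j < t
  have hclosed : ∀ j ∈ univ.filter (fun j => x j < t), ∀ k, x k < x j →
      k ∈ univ.filter (fun j => x j < t) := by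
    intro j hj k hk
    simp only [Finset.mem_filter, Finset.mem_univ, true_and] at hj ⊢
    exact hk.trans hj
  have hfull := aux_prod hn x hinj _ hclosed
  have hsplit : kmSminus x δ t * kmGminus x δ t
      = ∏ j ∈ univ.filter (fun j => x j < t), (1 - 1 / (atRisk x (x j) : ℝ)) := by
    rw [kmSminus, kmGminus]
    rw [← Finset.prod_filter_mul_prod_filter_not (univ.filter fun j => x j < t)
      (fun j => δ j = true)]
    congr 1 <;> rw [Finset.filter_filter] <;> apply Finset.prod_congr _ (fun _ _ => rfl) <;>
      apply Finset.filter_congr <;> intro j _ <;> simp [Bool.not_eq_true]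
  -- atRisk t relation
  have hcardrel := atRisk_compl x t
  have hfullval : ∏ j ∈ univ.filter (fun j => x j < t), (1 - 1 / (atRisk x (x j) : ℝ))
      = (atRisk x t : ℝ) / n := by
    rw [hfull]
    congr 1
    have : (((univ.filter fun j => x j < t).card : ℕ) : ℝ) = (n : ℝ) - atRisk x t := by
      have : ((atRisk x t + (univ.filter fun j => x j < t).card : ℕ) : ℝ) = (n : ℝ) := by
        exact_mod_cast congrArg Nat.cast hcardrel
      push_cast at this ⊢
      linarith
    rw [this]; ring
  -- kmS = kmSminus * (1 - 1/Y(t))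
  have hYpos : 0 < atRisk x t := Finset.card_pos.mpr ⟨i, by simp [ht]⟩
  have hSeq : kmS x δ t = kmSminus x δ t * (1 - 1 / (atRisk x t : ℝ)) := by
    rw [kmS, kmSminus]
    have hset : univ.filter (fun j => x j ≤ t ∧ δ j = true)
        = insert i (univ.filter fun j => x j < t ∧ δ j = true) := by
      ext j
      simp only [Finset.mem_filter, Finset.mem_univ, true_and, Finset.mem_insert]
      constructor
      · rintro ⟨hle, hd⟩
        rcases lt_or_eq_of_le hle with h | h
        · exact Or.inr ⟨h, hd⟩
        · exact Or.inl (hinj h)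
      · rintro (rfl | ⟨hl, hd⟩)
        · exact ⟨le_refl _, hδi⟩
        · exact ⟨le_of_lt hl, hd⟩
    have hnotmem : i ∉ univ.filter fun j => x j < t ∧ δ j = true := by
      simp [ht]
    rw [hset, Finset.prod_insert hnotmem, ht]
    ring
  -- put it together
  have hGne : kmGminus x δ t ≠ 0 := hG.ne'
  have hYne : (atRisk x t : ℝ) ≠ 0 := by exact_mod_cast hYpos.ne'
  have hnne : (n : ℝ) ≠ 0 := Nat.cast_ne_zero.mpr hn.ne'
  have hSmval : kmSminus x δ t = (atRisk x t : ℝ) / (n * kmGminus x δ t) := by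
    field_simp
    rw [mul_comm] at hsplit
    rw [← hsplit] at hfullval
    field_simp at hfullval
    linarith [hfullval]
  rw [hSeq, hSmval]
  field_simp
  ring
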